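/- (Epstein concavity, special case used) For a fixed positive semidefinite K×K matrix B and real p ≥ 1, the map A ↦ Tr (B A^{1/p} B)^p is concave on the cone of positive semidefinite K×K matrices. -/

import Mathlib

open Matrix MeasureTheory Set Topology Filter
open scoped ComplexOrder

namespace EpsteinAux

noncomputable def Jf (s : ℝ) : ℝ → ℝ := fun μ => μ ^ (s-1) / (1+μ)

noncomputable def Cs (s : ℝ) : ℝ := ∫ μ in Ioi (0:ℝ), Jf s μ

section scalar
variable {s a z : ℝ}

lemma continuousOn_rpow_const (c : ℝ) : ContinuousOn (fun x : ℝ => x ^ c) (Ioi 0) := fun x hx =>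
  (Real.continuousAt_rpow_const x c (Or.inl (ne_of_gt hx))).continuousWithinAt

lemma continuousOn_Jf (s : ℝ) : ContinuousOn (Jf s) (Ioi 0) := by
  apply (continuousOn_rpow_const (s-1)).div (continuous_const.add continuous_id).continuousOn
  intro x hx
  have : (0:ℝ) < x := hx
  show (1:ℝ) + x ≠ 0
  positivity

lemma integrableOn_Jf {s : ℝ} (hs0 : 0 < s) (hs1 : s < 1) : IntegrableOn (Jf s) (Ioi 0) := by
  rw [← Ioc_union_Ioi_eq_Ioi (zero_le_one : (0:ℝ) ≤ 1)]
  apply IntegrableOn.union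
  · have hbase : IntegrableOn (fun x : ℝ => x ^ (s-1)) (Ioc 0 1) := by
      have := (intervalIntegral.intervalIntegrable_rpow' (a := 0) (b := 1)
        (by linarith : (-1:ℝ) < s - 1))
      rw [intervalIntegrable_iff_integrableOn_Ioc_of_le (by norm_num)] at this
      exact this
    refine hbase.mono' (((continuousOn_Jf s).mono (fun x hx => hx.1)).aestronglyMeasurable measurableSet_Ioc) ?_
    filter_upwards [ae_restrict_mem measurableSet_Ioc] with x hx
    have hx0 : 0 < x := hx.1
    have h1 : (0:ℝ) < 1 + x := by linarith
    have hr : 0 ≤ x ^ (s-1) := Real.rpow_nonneg hx0.le _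
    simp only [Jf, Real.norm_eq_abs]
    rw [abs_of_nonneg (div_nonneg hr h1.le)]
    calc x ^ (s-1) / (1+x) ≤ x ^ (s-1) / 1 :=
          div_le_div_of_nonneg_left hr one_pos (by linarith)
      _ = x ^ (s-1) := div_one _
  · have hbase : IntegrableOn (fun x : ℝ => x ^ (s-2)) (Ioi 1) :=
      integrableOn_Ioi_rpow_of_lt (by linarith) one_pos
    refine hbase.mono' (((continuousOn_Jf s).mono (fun x (hx : x ∈ Ioi (1:ℝ)) => (lt_trans one_pos hx : (0:ℝ) < x))).aestronglyMeasurable measurableSet_Ioi) ?_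
    filter_upwards [ae_restrict_mem measurableSet_Ioi] with x hx
    have hx0 : (0:ℝ) < x := lt_trans one_pos hx
    have h1 : (0:ℝ) < 1 + x := by linarith
    have hr : 0 ≤ x ^ (s-1) := Real.rpow_nonneg hx0.le _
    simp only [Jf, Real.norm_eq_abs]
    rw [abs_of_nonneg (div_nonneg hr h1.le)]
    calc x ^ (s-1) / (1+x) ≤ x ^ (s-1) / x :=
          div_le_div_of_nonneg_left hr hx0 (by linarith)
      _ = x ^ (s-2) := by rw [← Real.rpow_sub_one hx0.ne']; ring_nf

lemma Jf_pos {s x : ℝ} (hx : 0 < x) : 0 < Jf s x := by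
  have : (0:ℝ) < 1 + x := by linarith
  exact div_pos (Real.rpow_pos_of_pos hx _) this

lemma Cs_pos {s : ℝ} (hs0 : 0 < s) (hs1 : s < 1) : 0 < Cs s := by
  rw [Cs, MeasureTheory.setIntegral_pos_iff_support_of_nonneg_ae]
  · have hsub : Ioi (0:ℝ) ⊆ Function.support (Jf s) ∩ Ioi 0 :=
      fun x hx => ⟨ne_of_gt (Jf_pos hx), hx⟩
    calc (0:ENNReal) < volume (Ioi (0:ℝ)) := by simp [Real.volume_Ioi]
      _ ≤ volume (Function.support (Jf s) ∩ Ioi 0) := measure_mono hsub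
  · filter_upwards [ae_restrict_mem measurableSet_Ioi] with x hx
    exact (Jf_pos hx).le
  · exact integrableOn_Jf hs0 hs1

lemma continuousOn_core (s : ℝ) (ha : 0 < a) (hz : 0 < z) :
    ContinuousOn (fun l : ℝ => l ^ (s-1) * (a*z/(a+l*z))) (Ioi 0) := by
  apply (continuousOn_rpow_const (s-1)).mul
  apply continuousOn_const.div
    (continuous_const.add (continuous_id.mul continuous_const)).continuousOn
  intro x hx
  have hx' : (0:ℝ) < x := hx
  show a + x * z ≠ 0
  positivity

lemma integrableOn_core (hs0 : 0 < s) (hs1 : s < 1) (ha : 0 ≤ a) (hz : 0 ≤ z) :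
    IntegrableOn (fun l : ℝ => l ^ (s-1) * (a*z/(a+l*z))) (Ioi 0) := by
  rcases eq_or_lt_of_le ha with ha0 | ha
  · have : (fun l : ℝ => l ^ (s-1) * (a*z/(a+l*z))) = fun _ => 0 := by
      funext l; rw [← ha0]; simp
    rw [this]; exact integrableOn_zero
  rcases eq_or_lt_of_le hz with hz0 | hz
  · have : (fun l : ℝ => l ^ (s-1) * (a*z/(a+l*z))) = fun _ => 0 := by
      funext l; rw [← hz0]; simp
    rw [this]; exact integrableOn_zero
  rw [← Ioc_union_Ioi_eq_Ioi (zero_le_one : (0:ℝ) ≤ 1)]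
  apply IntegrableOn.union
  · have hbase : IntegrableOn (fun x : ℝ => z * x ^ (s-1)) (Ioc 0 1) := by
      have := (intervalIntegral.intervalIntegrable_rpow' (a := 0) (b := 1)
        (by linarith : (-1:ℝ) < s - 1))
      rw [intervalIntegrable_iff_integrableOn_Ioc_of_le (by norm_num)] at this
      exact this.const_mul z
    refine hbase.mono' (((continuousOn_core s ha hz).mono
      (fun x hx => hx.1)).aestronglyMeasurable measurableSet_Ioc) ?_
    filter_upwards [ae_restrict_mem measurableSet_Ioc] with x hx
    have hx0 : 0 < x := hx.1
    have hden : (0:ℝ) < a + x*z := by positivity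
    have hr : 0 ≤ x ^ (s-1) := Real.rpow_nonneg hx0.le _
    have hq : a*z/(a+x*z) ≤ z := by
      calc a*z/(a+x*z) ≤ a*z/a := div_le_div_of_nonneg_left (by positivity) ha (by nlinarith)
        _ = z := by field_simp
    rw [Real.norm_eq_abs, abs_of_nonneg (by positivity)]
    calc x ^ (s-1) * (a*z/(a+x*z)) ≤ x ^ (s-1) * z := by
          exact mul_le_mul_of_nonneg_left hq hr
      _ = z * x ^ (s-1) := mul_comm _ _
  · have hbase : IntegrableOn (fun x : ℝ => a * x ^ (s-2)) (Ioi 1) :=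
      (integrableOn_Ioi_rpow_of_lt (by linarith) one_pos).const_mul a
    refine hbase.mono' (((continuousOn_core s ha hz).mono
      (fun x (hx : x ∈ Ioi (1:ℝ)) => (lt_trans one_pos hx : (0:ℝ) < x))).aestronglyMeasurable measurableSet_Ioi) ?_
    filter_upwards [ae_restrict_mem measurableSet_Ioi] with x hx
    have hx0 : (0:ℝ) < x := lt_trans one_pos hx
    have hden : (0:ℝ) < a + x*z := by positivity
    have hq : a*z/(a+x*z) ≤ a/x := by
      calc a*z/(a+x*z) ≤ a*z/(x*z) := div_le_div_of_nonneg_left (by positivity) (by positivity) (by nlinarith)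
        _ = a/x := mul_div_mul_right a x hz.ne'
    rw [Real.norm_eq_abs, abs_of_nonneg (by positivity)]
    calc x ^ (s-1) * (a*z/(a+x*z)) ≤ x ^ (s-1) * (a/x) :=
          mul_le_mul_of_nonneg_left hq (Real.rpow_nonneg hx0.le _)
      _ = a * x ^ (s-2) := by
          have h5 : x ^ (s-2) = x ^ (s-1) / x := by
            rw [show s-2 = s-1-1 by ring, Real.rpow_sub_one hx0.ne']
          rw [h5]; ring

lemma integral_core (hs0 : 0 < s) (hs1 : s < 1) (ha : 0 ≤ a) (hz : 0 ≤ z) :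
    ∫ l in Ioi (0:ℝ), l ^ (s-1) * (a*z/(a+l*z)) = Cs s * (a ^ s * z ^ (1-s)) := by
  rcases eq_or_lt_of_le ha with ha0 | ha
  · have h1 : EqOn (fun l : ℝ => l ^ (s-1) * (a*z/(a+l*z))) (fun _ => (0:ℝ)) (Ioi 0) := by
      intro l _; rw [← ha0]; simp
    rw [setIntegral_congr_fun measurableSet_Ioi h1, ← ha0, Real.zero_rpow hs0.ne']
    simp
  rcases eq_or_lt_of_le hz with hz0 | hz
  · have h1 : EqOn (fun l : ℝ => l ^ (s-1) * (a*z/(a+l*z))) (fun _ => (0:ℝ)) (Ioi 0) := by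
      intro l _; rw [← hz0]; simp
    rw [setIntegral_congr_fun measurableSet_Ioi h1, ← hz0,
      Real.zero_rpow (by linarith : (0:ℝ) < 1-s).ne']
    simp
  have hc : (0:ℝ) < z/a := by positivity
  have hK : z ^ (2-s) * a^(s-1) * (z/a)^(s-1) = z := by
    rw [Real.div_rpow hz.le ha.le]
    have hane : a^(s-1) ≠ 0 := ne_of_gt (Real.rpow_pos_of_pos ha _)
    have h2 : z^(2-s) * z^(s-1) = z := by
      rw [← Real.rpow_add hz]; norm_num
    field_simp
    linear_combination h2
  have key : EqOn (fun l : ℝ => l ^ (s-1) * (a*z/(a+l*z)))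
      (fun l : ℝ => (z ^ (2-s) * a^(s-1)) * Jf s (z/a*l)) (Ioi 0) := by
    intro l hl
    have hl0 : (0:ℝ) < l := hl
    have hden : (0:ℝ) < a + l*z := by positivity
    have h1p : (0:ℝ) < 1 + z/a*l := by positivity
    simp only [Jf]
    rw [Real.mul_rpow hc.le hl0.le]
    rw [show (1 + z/a*l) = (a+l*z)/a by field_simp]
    rw [div_div_eq_mul_div]
    have expand : z ^ (2-s) * a^(s-1) * ((z/a)^(s-1) * l^(s-1) * a / (a+l*z))
        = (z ^ (2-s) * a^(s-1) * (z/a)^(s-1)) * (l^(s-1) * a / (a+l*z)) := by ring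
    rw [expand, hK]
    field_simp
  rw [setIntegral_congr_fun measurableSet_Ioi key]
  rw [MeasureTheory.integral_const_mul]
  rw [MeasureTheory.integral_comp_mul_left_Ioi (Jf s) 0 hc]
  rw [mul_zero, smul_eq_mul, ← Cs]
  have h3 : a ^ (s-1) * a = a ^ s := by
    rw [← Real.rpow_add_one ha.ne']; norm_num
  have h4 : z ^ (1-s) = z ^ (2-s) / z := by
    rw [show (1:ℝ)-s = (2-s)-1 by ring, Real.rpow_sub_one hz.ne']
  rw [inv_div]
  calc z ^ (2-s) * a ^ (s-1) * (a/z * Cs s) = (a^(s-1)*a) * (z^(2-s)/z) * Cs s := by ring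
    _ = Cs s * (a ^ s * z ^ (1-s)) := by rw [h3, h4]; ring


lemma sc1 {a b : ℝ} (ha : 0 ≤ a) (hb : 0 ≤ b) (w y : ℂ) :
    a*b/(a+b) * Complex.normSq w ≤ a * Complex.normSq (w - y) + b * Complex.normSq y := by
  rcases eq_or_lt_of_le (add_nonneg ha hb) with hab | hab
  · have ha0 : a = 0 := by nlinarith
    have hb0 : b = 0 := by nlinarith
    rw [ha0, hb0]
    simp
  rw [div_mul_eq_mul_div, div_le_iff₀ hab]
  have hw : w = (w - y) + y := by ring
  set u := w - y with hu
  rw [hw, Complex.normSq_add]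
  have h1 : (u * (starRingEnd ℂ) y).re ≤ Real.sqrt (Complex.normSq u * Complex.normSq y) := by
    calc (u * (starRingEnd ℂ) y).re ≤ ‖u * (starRingEnd ℂ) y‖ := Complex.re_le_norm _
      _ = ‖u‖ * ‖y‖ := by rw [norm_mul, Complex.norm_conj]
      _ = Real.sqrt (Complex.normSq u) * Real.sqrt (Complex.normSq y) := by
          rw [Complex.norm_def, Complex.norm_def]
      _ = Real.sqrt (Complex.normSq u * Complex.normSq y) :=
          (Real.sqrt_mul (Complex.normSq_nonneg u) _).symm
  have hsq : Real.sqrt (Complex.normSq u * Complex.normSq y)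
      = Real.sqrt (Complex.normSq u) * Real.sqrt (Complex.normSq y) :=
    Real.sqrt_mul (Complex.normSq_nonneg u) _
  have h2 := Real.sq_sqrt (Complex.normSq_nonneg u)
  have h3 := Real.sq_sqrt (Complex.normSq_nonneg y)
  have h4 := Real.sqrt_nonneg (Complex.normSq u)
  have h5 := Real.sqrt_nonneg (Complex.normSq y)
  have h6 : 2*(a*b) * (u * (starRingEnd ℂ) y).re
      ≤ 2*(a*b) * (Real.sqrt (Complex.normSq u) * Real.sqrt (Complex.normSq y)) :=
    mul_le_mul_of_nonneg_left (h1.trans (le_of_eq hsq)) (by positivity)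
  rw [← h2, ← h3]
  nlinarith [sq_nonneg (a * Real.sqrt (Complex.normSq u) - b * Real.sqrt (Complex.normSq y)), h6]

lemma sc2 {a b : ℝ} (ha : 0 ≤ a) (hb : 0 ≤ b) (c : ℂ) :
    a * Complex.normSq (c - ((a/(a+b) : ℝ) : ℂ) * c) + b * Complex.normSq (((a/(a+b) : ℝ) : ℂ) * c)
      = a*b/(a+b) * Complex.normSq c := by
  rcases eq_or_lt_of_le (add_nonneg ha hb) with hab | hab
  · have ha0 : a = 0 := by nlinarith
    have hb0 : b = 0 := by nlinarith
    rw [ha0, hb0]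
    simp
  have h1 : c - ((a/(a+b) : ℝ) : ℂ) * c = (((1 - a/(a+b) : ℝ)) : ℂ) * c := by
    push_cast; ring
  rw [h1, Complex.normSq_mul, Complex.normSq_mul, Complex.normSq_ofReal, Complex.normSq_ofReal]
  have hane : a + b ≠ 0 := ne_of_gt hab
  field_simp
  ring

lemma young_p {p m n : ℝ} (hp : 1 < p) (hm : 0 ≤ m) (hn : 0 ≤ n) :
    p * (m * n) ≤ m ^ p + (p - 1) * n ^ (p/(p-1)) := by
  have hpq : p.HolderConjugate (p/(p-1)) := Real.HolderConjugate.conjExponent hp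
  have h := Real.young_inequality m n hpq
  rw [abs_of_nonneg hm, abs_of_nonneg hn] at h
  have hq : p / (p/(p-1)) = p - 1 := by
    rw [div_div_eq_mul_div]
    field_simp
  have hp0 : 0 < p := by linarith
  calc p * (m * n) ≤ p * (m ^ p / p + n ^ (p/(p-1)) / (p/(p-1))) :=
        mul_le_mul_of_nonneg_left h hp0.le
    _ = m ^ p + (p - 1) * n ^ (p/(p-1)) := by
        have h1 : p ≠ 0 := by linarith
        have h2 : p - 1 ≠ 0 := by linarith
        field_simp

lemma rpow_mul_rpow_sub {p m : ℝ} (hp : 1 < p) (hm : 0 ≤ m) :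
    m * m ^ (p - 1) = m ^ p := by
  rcases eq_or_lt_of_le hm with hm0 | hm0
  · rw [← hm0, zero_mul, Real.zero_rpow (show p ≠ 0 by linarith)]
  · calc m * m ^ (p-1) = m ^ (1:ℝ) * m ^ (p-1) := by rw [Real.rpow_one]
      _ = m ^ (1 + (p-1)) := (Real.rpow_add hm0 _ _).symm
      _ = m ^ p := by norm_num

lemma rpow_comp1 {p m : ℝ} (hp : 1 < p) (hm : 0 ≤ m) :
    (m ^ p) ^ ((p-1)/p) = m ^ (p - 1) := by
  rw [← Real.rpow_mul hm, show p * ((p-1)/p) = p - 1 from by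
    have : p ≠ 0 := by linarith
    field_simp]

lemma rpow_comp2 {p z : ℝ} (hp : 1 < p) (hz : 0 ≤ z) :
    (z ^ ((p-1)/p)) ^ (p/(p-1)) = z := by
  rw [← Real.rpow_mul hz]
  have : (p-1)/p * (p/(p-1)) = 1 := by
    have h1 : p ≠ 0 := by linarith
    have h2 : p - 1 ≠ 0 := by linarith
    field_simp
  rw [this, Real.rpow_one]

lemma continuousOn_finite {s : Set ℝ} (hs : s.Finite) (f : ℝ → ℝ) : ContinuousOn f s := by
  intro x hx
  have h1 : (s \ {x}).Finite := hs.subset diff_subset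
  have h2 : IsClosed (s \ {x}) := h1.isClosed
  have h3 : x ∉ closure (s \ {x}) := by
    rw [h2.closure_eq]; simp
  have h4 : 𝓝[s \ {x}] x = ⊥ := by
    by_contra h
    exact h3 (mem_closure_iff_nhdsWithin_neBot.mpr ⟨h⟩)
  have h5 : 𝓝[s] x ≤ pure x := by
    have hsub : s ⊆ (s \ {x}) ∪ {x} := by
      intro y hy
      by_cases hxy : y = x
      · exact Or.inr (by simp [hxy])
      · exact Or.inl ⟨hy, hxy⟩
    calc 𝓝[s] x ≤ 𝓝[(s \ {x}) ∪ {x}] x := nhdsWithin_mono x hsub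
      _ = 𝓝[s \ {x}] x ⊔ 𝓝[{x}] x := nhdsWithin_union _ _ _
      _ = ⊥ ⊔ pure x := by rw [h4, nhdsWithin_singleton]
      _ = pure x := bot_sup_eq _
  exact (tendsto_pure_nhds f x).mono_left h5

section sums

variable {n : ℕ} {s : ℝ}

lemma integrableOn_sum (hs0 : 0 < s) (hs1 : s < 1) (a z : Fin n → ℝ) (w : Fin n → Fin n → ℝ)
    (ha : ∀ i, 0 ≤ a i) (hz : ∀ j, 0 ≤ z j) :
    IntegrableOn (fun l : ℝ => ∑ i, ∑ j, w i j * (l ^ (s-1) * (a i * z j/(a i + l * z j))))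
      (Ioi 0) := by
  apply MeasureTheory.integrable_finset_sum
  intro i _
  apply MeasureTheory.integrable_finset_sum
  intro j _
  exact ((integrableOn_core hs0 hs1 (ha i) (hz j)).const_mul (w i j))

lemma integral_sum (hs0 : 0 < s) (hs1 : s < 1) (a z : Fin n → ℝ) (w : Fin n → Fin n → ℝ)
    (ha : ∀ i, 0 ≤ a i) (hz : ∀ j, 0 ≤ z j) :
    ∫ l in Ioi (0:ℝ), ∑ i, ∑ j, w i j * (l ^ (s-1) * (a i * z j/(a i + l * z j)))
      = Cs s * ∑ i, ∑ j, (a i) ^ s * (z j) ^ (1-s) * w i j := by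
  rw [MeasureTheory.integral_finset_sum _ (fun i _ => by
    apply MeasureTheory.integrable_finset_sum
    intro j _
    exact ((integrableOn_core hs0 hs1 (ha i) (hz j)).const_mul (w i j)))]
  rw [Finset.mul_sum]
  apply Finset.sum_congr rfl
  intro i _
  rw [MeasureTheory.integral_finset_sum _ (fun j _ =>
    ((integrableOn_core hs0 hs1 (ha i) (hz j)).const_mul (w i j)))]
  rw [Finset.mul_sum]
  apply Finset.sum_congr rfl
  intro j _
  rw [MeasureTheory.integral_const_mul, integral_core hs0 hs1 (ha i) (hz j)]
  ring

end sums


end scalar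

section matrices

variable {K : ℕ} {A Z B : Matrix (Fin K) (Fin K) ℂ}

local notation "Mat" => Matrix (Fin K) (Fin K) ℂ

lemma star_mul_self_eigen (hA : A.IsHermitian) :
    star (hA.eigenvectorUnitary : Mat) * (hA.eigenvectorUnitary : Mat) = 1 :=
  Unitary.star_mul_self_of_mem (SetLike.coe_mem _)

lemma mul_star_self_eigen (hA : A.IsHermitian) :
    (hA.eigenvectorUnitary : Mat) * star (hA.eigenvectorUnitary : Mat) = 1 :=
  Unitary.mul_star_self_of_mem (SetLike.coe_mem _)

lemma trace_core (D₁ D₂ U V C : Mat) :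
    (U * D₁ * star U * C * (V * D₂ * star V) * star C).trace
      = (D₁ * (star U * C * V) * D₂ * star (star U * C * V)).trace := by
  have h : star (star U * C * V) = star V * star C * U := by
    simp [StarMul.star_mul, mul_assoc]
  rw [h]
  simp only [mul_assoc]
  rw [Matrix.trace_mul_comm]
  simp only [mul_assoc]

lemma trace_diag (d e : Fin K → ℂ) (G : Mat) :
    (Matrix.diagonal d * G * Matrix.diagonal e * star G).trace
      = ∑ i, ∑ j, d i * e j * (G i j * star (G i j)) := by
  have hentry : ∀ i, (Matrix.diagonal d * G * Matrix.diagonal e * star G) i i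
      = ∑ j, d i * e j * (G i j * star (G i j)) := by
    intro i
    rw [Matrix.mul_apply]
    apply Finset.sum_congr rfl
    intro j _
    rw [Matrix.mul_diagonal, Matrix.diagonal_mul, Matrix.star_eq_conjTranspose,
      Matrix.conjTranspose_apply]
    ring
  simp only [Matrix.trace, Matrix.diag_apply]
  exact Finset.sum_congr rfl fun i _ => hentry i

lemma trace_formula (hA : A.IsHermitian) (hZ : Z.IsHermitian) (f g : ℝ → ℝ) (C : Mat) :
    (cfc f A * C * cfc g Z * Cᴴ).trace
      = ((∑ i, ∑ j, f (hA.eigenvalues i) * g (hZ.eigenvalues j) *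
          Complex.normSq ((star (hA.eigenvectorUnitary : Mat) * C *
            (hZ.eigenvectorUnitary : Mat)) i j) : ℝ) : ℂ) := by
  rw [hA.cfc_eq, hZ.cfc_eq, Matrix.IsHermitian.cfc, Matrix.IsHermitian.cfc,
    Unitary.conjStarAlgAut_apply, Unitary.conjStarAlgAut_apply,
    ← Matrix.star_eq_conjTranspose C]
  rw [trace_core, trace_diag]
  push_cast
  apply Finset.sum_congr rfl
  intro i _
  apply Finset.sum_congr rfl
  intro j _
  have : ∀ w : ℂ, w * star w = ((Complex.normSq w : ℝ) : ℂ) := fun w => Complex.mul_conj w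
  rw [this]
  simp [Function.comp]

lemma trace_cfc_eq (hA : A.IsHermitian) (f : ℝ → ℝ) :
    (cfc f A).trace = ((∑ i, f (hA.eigenvalues i) : ℝ) : ℂ) := by
  rw [hA.cfc_eq, Matrix.IsHermitian.cfc, Unitary.conjStarAlgAut_apply, Matrix.trace_mul_cycle, star_mul_self_eigen hA,
    one_mul, Matrix.trace_diagonal]
  push_cast
  simp [Function.comp]

lemma posSemidef_cfc (hA : A.PosSemidef) (f : ℝ → ℝ) (hf : ∀ x, 0 ≤ x → 0 ≤ f x) :
    (cfc f A).PosSemidef := by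
  rw [hA.1.cfc_eq, Matrix.IsHermitian.cfc]
  have hd : (Matrix.diagonal (RCLike.ofReal ∘ f ∘ hA.1.eigenvalues) : Mat).PosSemidef := by
    rw [Matrix.posSemidef_diagonal_iff]
    intro i
    rw [Function.comp_apply, Function.comp_apply]
    exact Complex.zero_le_real.mpr (hf _ (hA.eigenvalues_nonneg i))
  have := hd.mul_mul_conjTranspose_same (hA.1.eigenvectorUnitary : Mat)
  rwa [← Matrix.star_eq_conjTranspose] at this

lemma posSemidef_conj (hB : B.IsHermitian) {N : Mat} (hN : N.PosSemidef) :
    (B * N * B).PosSemidef := by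
  have := hN.mul_mul_conjTranspose_same B
  rwa [hB.eq] at this

lemma posSemidef_smul {t : ℝ} (ht : 0 ≤ t) (hA : A.PosSemidef) : (t • A).PosSemidef := by
  exact hA.smul ht

lemma posSemidef_add (hA : A.PosSemidef) {Z : Mat} (hZ : Z.PosSemidef) : (A + Z).PosSemidef := by
  exact hA.add hZ

lemma sum_normSq_row {G : Mat} (hG : G * star G = 1) (i : Fin K) :
    ∑ j, Complex.normSq (G i j) = 1 := by
  have h := congrArg (fun M : Mat => M i i) hG
  simp only [Matrix.mul_apply, Matrix.one_apply_eq] at h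
  have : ∀ j, G i j * star G j i = ((Complex.normSq (G i j) : ℝ) : ℂ) := by
    intro j
    rw [Matrix.star_eq_conjTranspose, Matrix.conjTranspose_apply, ← starRingEnd_apply,
      Complex.mul_conj]
  rw [Finset.sum_congr rfl fun j _ => this j] at h
  exact_mod_cast h

lemma sum_normSq_col {G : Mat} (hG : star G * G = 1) (j : Fin K) :
    ∑ i, Complex.normSq (G i j) = 1 := by
  have h := congrArg (fun M : Mat => M j j) hG
  simp only [Matrix.mul_apply, Matrix.one_apply_eq] at h
  have : ∀ i, star G j i * G i j = ((Complex.normSq (G i j) : ℝ) : ℂ) := by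
    intro i
    rw [Matrix.star_eq_conjTranspose, Matrix.conjTranspose_apply, mul_comm, ← starRingEnd_apply,
      Complex.mul_conj]
  rw [Finset.sum_congr rfl fun i _ => this i] at h
  exact_mod_cast h

lemma isSA (h : A.IsHermitian) : IsSelfAdjoint A := h

lemma spec_nonneg (hA : A.PosSemidef) : ∀ x ∈ spectrum ℝ A, (0:ℝ) ≤ x := by
  intro x hx
  rw [hA.1.spectrum_real_eq_range_eigenvalues] at hx
  obtain ⟨i, rfl⟩ := hx
  exact hA.eigenvalues_nonneg i

lemma cyc_B (hB : B.IsHermitian) (X Y : Mat) :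
    (B * X * B * Y).trace = (X * B * Y * Bᴴ).trace := by
  rw [hB.eq]
  simp only [mul_assoc]
  rw [Matrix.trace_mul_comm]
  simp only [mul_assoc]

lemma FF_sum (hB : B.IsHermitian) {p : ℝ} (hp : 1 < p) (hA : A.PosSemidef) (hZ : Z.PosSemidef) :
    ((B * cfc (fun x : ℝ => x ^ (1/p)) A * B * cfc (fun x : ℝ => x ^ ((p-1)/p)) Z).trace).re
      = ∑ i, ∑ j, (hA.1.eigenvalues i) ^ (1/p) * (hZ.1.eigenvalues j) ^ (1 - 1/p)
          * Complex.normSq ((star (hA.1.eigenvectorUnitary : Mat) * B *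
              (hZ.1.eigenvectorUnitary : Mat)) i j) := by
  rw [cyc_B hB, trace_formula hA.1 hZ.1 _ _ B, Complex.ofReal_re]
  have hpe : (p-1)/p = 1 - 1/p := by
    rw [sub_div, div_self (by linarith : p ≠ 0)]
  rw [hpe]

lemma quad_A (hA : A.PosSemidef) (hZ : Z.PosSemidef) (X : Mat) :
    ((Xᴴ * A * X).trace).re
      = ∑ i, ∑ j, hA.1.eigenvalues i *
          Complex.normSq ((star (hA.1.eigenvectorUnitary : Mat) * X *
            (hZ.1.eigenvectorUnitary : Mat)) i j) := by
  have hone : cfc (fun _ : ℝ => (1:ℝ)) Z = 1 := cfc_one ℝ Z (isSA hZ.1)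
  have h1 : (Xᴴ * A * X).trace
      = (cfc (fun x : ℝ => x) A * X * cfc (fun _ : ℝ => (1:ℝ)) Z * Xᴴ).trace := by
    rw [cfc_id' ℝ A (isSA hA.1), hone, Matrix.mul_one]
    exact (Matrix.trace_mul_cycle Xᴴ A X).trans (Matrix.trace_mul_cycle X Xᴴ A)
  rw [h1, trace_formula hA.1 hZ.1 _ _ X, Complex.ofReal_re]
  apply Finset.sum_congr rfl
  intro i _
  apply Finset.sum_congr rfl
  intro j _
  ring

lemma quad_Z (hA : A.PosSemidef) (hZ : Z.PosSemidef) (Y : Mat) :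
    ((Yᴴ * Y * Z).trace).re
      = ∑ i, ∑ j, hZ.1.eigenvalues j *
          Complex.normSq ((star (hA.1.eigenvectorUnitary : Mat) * Y *
            (hZ.1.eigenvectorUnitary : Mat)) i j) := by
  have hone : cfc (fun _ : ℝ => (1:ℝ)) A = 1 := cfc_one ℝ A (isSA hA.1)
  have h1 : (Yᴴ * Y * Z).trace
      = (cfc (fun x : ℝ => x) Z * Yᴴ * cfc (fun _ : ℝ => (1:ℝ)) A * (Yᴴ)ᴴ).trace := by
    rw [cfc_id' ℝ Z (isSA hZ.1), hone, Matrix.mul_one, Matrix.conjTranspose_conjTranspose]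
    exact Matrix.trace_mul_cycle Yᴴ Y Z
  rw [h1, trace_formula hZ.1 hA.1 _ _ Yᴴ, Complex.ofReal_re]
  rw [Finset.sum_comm]
  apply Finset.sum_congr rfl
  intro i _
  apply Finset.sum_congr rfl
  intro j _
  have hct : star (hZ.1.eigenvectorUnitary : Mat) * Yᴴ * (hA.1.eigenvectorUnitary : Mat)
      = (star (hA.1.eigenvectorUnitary : Mat) * Y * (hZ.1.eigenvectorUnitary : Mat))ᴴ := by
    simp only [Matrix.star_eq_conjTranspose, Matrix.conjTranspose_mul,
      Matrix.conjTranspose_conjTranspose, mul_assoc]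
  rw [hct, Matrix.conjTranspose_apply, ← starRingEnd_apply, Complex.normSq_conj]
  ring

lemma lin_re (X A₁ A₂ : Mat) (t : ℝ) :
    ((Xᴴ * (t•A₁+(1-t)•A₂) * X).trace).re
      = t * ((Xᴴ*A₁*X).trace).re + (1-t) * ((Xᴴ*A₂*X).trace).re := by
  rw [Matrix.mul_add, Matrix.add_mul, Matrix.mul_smul, Matrix.smul_mul, Matrix.mul_smul,
    Matrix.smul_mul, Matrix.trace_add, Matrix.trace_smul, Matrix.trace_smul]
  simp [Complex.add_re, Complex.real_smul, Complex.mul_re]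

lemma lin_re_right (W Z₁ Z₂ : Mat) (t : ℝ) :
    ((W * (t•Z₁+(1-t)•Z₂)).trace).re
      = t * ((W*Z₁).trace).re + (1-t) * ((W*Z₂).trace).re := by
  rw [Matrix.mul_add, Matrix.mul_smul, Matrix.mul_smul, Matrix.trace_add, Matrix.trace_smul,
    Matrix.trace_smul]
  simp [Complex.add_re, Complex.real_smul, Complex.mul_re]

lemma sc0 (a z l w : ℝ) : l * (w * (a*z/(a+l*z))) = a*(l*z)/(a+l*z) * w := by
  rw [mul_div_assoc, mul_div_assoc]
  ring

lemma LL_lower (hA : A.PosSemidef) (hZ : Z.PosSemidef) {l : ℝ} (hl : 0 < l) (Y : Mat) :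
    l * (∑ i, ∑ j, Complex.normSq ((star (hA.1.eigenvectorUnitary : Mat) * B *
          (hZ.1.eigenvectorUnitary : Mat)) i j)
        * (hA.1.eigenvalues i * hZ.1.eigenvalues j /
            (hA.1.eigenvalues i + l * hZ.1.eigenvalues j)))
      ≤ (((B-Y)ᴴ * A * (B-Y)).trace).re + l * ((Yᴴ * Y * Z).trace).re := by
  rw [quad_A hA hZ (B-Y), quad_Z hA hZ Y]
  rw [Finset.mul_sum, Finset.mul_sum]
  rw [← Finset.sum_add_distrib]
  apply Finset.sum_le_sum
  intro i _
  rw [Finset.mul_sum, Finset.mul_sum, ← Finset.sum_add_distrib]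
  apply Finset.sum_le_sum
  intro j _
  have hsub : (star (hA.1.eigenvectorUnitary : Mat) * (B - Y) *
      (hZ.1.eigenvectorUnitary : Mat)) i j
      = (star (hA.1.eigenvectorUnitary : Mat) * B * (hZ.1.eigenvectorUnitary : Mat)) i j
        - (star (hA.1.eigenvectorUnitary : Mat) * Y * (hZ.1.eigenvectorUnitary : Mat)) i j := by
    rw [Matrix.mul_sub, Matrix.sub_mul, Matrix.sub_apply]
  rw [hsub, sc0]
  have hb : 0 ≤ l * hZ.1.eigenvalues j := mul_nonneg hl.le (hZ.eigenvalues_nonneg j)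
  have h := sc1 (hA.eigenvalues_nonneg i) hb
    ((star (hA.1.eigenvectorUnitary : Mat) * B * (hZ.1.eigenvectorUnitary : Mat)) i j)
    ((star (hA.1.eigenvectorUnitary : Mat) * Y * (hZ.1.eigenvectorUnitary : Mat)) i j)
  calc hA.1.eigenvalues i * (l * hZ.1.eigenvalues j) /
        (hA.1.eigenvalues i + l * hZ.1.eigenvalues j)
        * Complex.normSq ((star (hA.1.eigenvectorUnitary : Mat) * B *
            (hZ.1.eigenvectorUnitary : Mat)) i j)
      ≤ hA.1.eigenvalues i * Complex.normSq _ + (l * hZ.1.eigenvalues j) * Complex.normSq _ := h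
    _ = hA.1.eigenvalues i * Complex.normSq _ + l * (hZ.1.eigenvalues j * Complex.normSq _) := by
        ring

lemma LL_attain (hA : A.PosSemidef) (hZ : Z.PosSemidef) {l : ℝ} (hl : 0 < l) :
    ∃ Y : Mat, (((B-Y)ᴴ * A * (B-Y)).trace).re + l * ((Yᴴ * Y * Z).trace).re
      = l * (∑ i, ∑ j, Complex.normSq ((star (hA.1.eigenvectorUnitary : Mat) * B *
            (hZ.1.eigenvectorUnitary : Mat)) i j)
          * (hA.1.eigenvalues i * hZ.1.eigenvalues j /
              (hA.1.eigenvalues i + l * hZ.1.eigenvalues j))) := by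
  set U := (hA.1.eigenvectorUnitary : Mat)
  set V := (hZ.1.eigenvectorUnitary : Mat)
  set a := hA.1.eigenvalues
  set z := hZ.1.eigenvalues
  set c := star U * B * V with hc
  refine ⟨U * Matrix.of (fun i j => ((a i / (a i + l * z j) : ℝ) : ℂ) * c i j) * star V, ?_⟩
  set Y := U * Matrix.of (fun i j => ((a i / (a i + l * z j) : ℝ) : ℂ) * c i j) * star V with hY
  have hYc : star U * Y * V = Matrix.of (fun i j => ((a i / (a i + l * z j) : ℝ) : ℂ) * c i j) := by
    rw [hY]
    calc star U * (U * Matrix.of (fun i j => ((a i / (a i + l * z j) : ℝ) : ℂ) * c i j) * star V) * V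
        = (star U * U) * Matrix.of (fun i j => ((a i / (a i + l * z j) : ℝ) : ℂ) * c i j)
            * (star V * V) := by simp only [mul_assoc]
      _ = _ := by rw [star_mul_self_eigen hA.1, star_mul_self_eigen hZ.1, one_mul, mul_one]
  rw [quad_A hA hZ (B-Y), quad_Z hA hZ Y]
  rw [Finset.mul_sum, Finset.mul_sum, ← Finset.sum_add_distrib]
  apply Finset.sum_congr rfl
  intro i _
  rw [Finset.mul_sum, Finset.mul_sum, ← Finset.sum_add_distrib]
  apply Finset.sum_congr rfl
  intro j _
  have hsub : (star U * (B - Y) * V) i j = c i j - (star U * Y * V) i j := by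
    rw [Matrix.mul_sub, Matrix.sub_mul, Matrix.sub_apply, hc]
  rw [hsub, hYc]
  have hb : 0 ≤ l * z j := mul_nonneg hl.le (hZ.eigenvalues_nonneg j)
  have h := sc2 (hA.eigenvalues_nonneg i) hb (c i j)
  rw [Matrix.of_apply]
  calc a i * Complex.normSq (c i j - ((a i / (a i + l * z j) : ℝ) : ℂ) * c i j)
        + l * (z j * Complex.normSq (((a i / (a i + l * z j) : ℝ) : ℂ) * c i j))
      = a i * Complex.normSq (c i j - ((a i / (a i + l * z j) : ℝ) : ℂ) * c i j)
        + (l * z j) * Complex.normSq (((a i / (a i + l * z j) : ℝ) : ℂ) * c i j) := by ring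
    _ = a i * (l * z j) / (a i + l * z j) * Complex.normSq (c i j) := h
    _ = l * (Complex.normSq (c i j) * (a i * z j / (a i + l * z j))) := by
        rw [sc0 (a i) (z j) l (Complex.normSq (c i j))]
  -- note: sc0 gives l * (w * (az/(a+lz))) = a*(l*z)/(a+l*z) * w

lemma young_step (hB : B.IsHermitian) {p : ℝ} (hp : 1 < p)
    (hA : A.PosSemidef) (hZ : Z.PosSemidef) :
    p * ((B * cfc (fun x : ℝ => x ^ (1/p)) A * B *
        cfc (fun x : ℝ => x ^ ((p-1)/p)) Z).trace).re
      ≤ ((cfc (fun x : ℝ => x ^ p) (B * cfc (fun x : ℝ => x ^ (1/p)) A * B)).trace).re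
        + (p - 1) * (Z.trace).re := by
  have hsA : (cfc (fun x : ℝ => x ^ (1/p)) A).PosSemidef :=
    posSemidef_cfc hA _ (fun x hx => Real.rpow_nonneg hx _)
  set M := B * cfc (fun x : ℝ => x ^ (1/p)) A * B with hMdef
  have hM : M.PosSemidef := posSemidef_conj hB hsA
  have h1 : M * cfc (fun x : ℝ => x ^ ((p-1)/p)) Z
      = cfc (fun x : ℝ => x) M * (1 : Mat) * cfc (fun x : ℝ => x ^ ((p-1)/p)) Z * (1 : Mat)ᴴ := by
    rw [cfc_id' ℝ M (isSA hM.1), Matrix.conjTranspose_one, Matrix.mul_one, Matrix.mul_one]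
  rw [h1, trace_formula hM.1 hZ.1 _ _ 1, Complex.ofReal_re,
    trace_cfc_eq hM.1, Complex.ofReal_re]
  have hZtr : (Z.trace).re = ∑ j, hZ.1.eigenvalues j := by
    have h2 := trace_cfc_eq hZ.1 (fun x : ℝ => x)
    rw [cfc_id' ℝ Z (isSA hZ.1)] at h2
    rw [h2, Complex.ofReal_re]
  rw [hZtr]
  set U := (hM.1.eigenvectorUnitary : Mat)
  set V := (hZ.1.eigenvectorUnitary : Mat)
  set m := hM.1.eigenvalues
  set z := hZ.1.eigenvalues
  have hGG : (star U * (1:Mat) * V) * star (star U * (1:Mat) * V) = 1 := by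
    rw [Matrix.mul_one]
    calc star U * V * star (star U * V) = star U * (V * star V) * U := by
          simp only [StarMul.star_mul, star_star, mul_assoc]
      _ = 1 := by
          rw [mul_star_self_eigen hZ.1, Matrix.mul_one, star_mul_self_eigen hM.1]
  have hGG' : star (star U * (1:Mat) * V) * (star U * (1:Mat) * V) = 1 := by
    rw [Matrix.mul_one]
    calc star (star U * V) * (star U * V) = star V * (U * star U) * V := by
          simp only [StarMul.star_mul, star_star, mul_assoc]
      _ = 1 := by
          rw [mul_star_self_eigen hM.1, Matrix.mul_one, star_mul_self_eigen hZ.1]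
  have hrow := sum_normSq_row hGG
  have hcol := sum_normSq_col hGG'
  have hmn : ∀ i, 0 ≤ m i := hM.eigenvalues_nonneg
  have hzn : ∀ j, 0 ≤ z j := hZ.eigenvalues_nonneg
  calc p * ∑ i, ∑ j, m i * (z j) ^ ((p-1)/p) *
        Complex.normSq ((star U * (1:Mat) * V) i j)
      = ∑ i, ∑ j, p * (m i * (z j) ^ ((p-1)/p)) *
          Complex.normSq ((star U * (1:Mat) * V) i j) := by
        rw [Finset.mul_sum]
        exact Finset.sum_congr rfl fun i _ => by
          rw [Finset.mul_sum]
          exact Finset.sum_congr rfl fun j _ => by ring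
    _ ≤ ∑ i, ∑ j, ((m i)^p + (p-1) * z j) *
          Complex.normSq ((star U * (1:Mat) * V) i j) := by
        apply Finset.sum_le_sum
        intro i _
        apply Finset.sum_le_sum
        intro j _
        apply mul_le_mul_of_nonneg_right _ (Complex.normSq_nonneg _)
        have hy := young_p hp (hmn i) (Real.rpow_nonneg (hzn j) ((p-1)/p))
        rwa [rpow_comp2 hp (hzn j)] at hy
    _ = (∑ i, ∑ j, (m i)^p * Complex.normSq ((star U * (1:Mat) * V) i j))
        + (∑ i, ∑ j, ((p-1) * z j) * Complex.normSq ((star U * (1:Mat) * V) i j)) := by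
        rw [← Finset.sum_add_distrib]
        apply Finset.sum_congr rfl
        intro i _
        rw [← Finset.sum_add_distrib]
        apply Finset.sum_congr rfl
        intro j _
        ring
    _ = ∑ i, (m i)^p + (p-1) * ∑ j, z j := by
        congr 1
        · apply Finset.sum_congr rfl
          intro i _
          rw [← Finset.mul_sum, hrow i, mul_one]
        · rw [Finset.sum_comm, Finset.mul_sum]
          apply Finset.sum_congr rfl
          intro j _
          rw [← Finset.mul_sum, hcol j, mul_one]

lemma attain (hB : B.IsHermitian) {p : ℝ} (hp : 1 < p) (hA : A.PosSemidef) :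
    ((B * cfc (fun x : ℝ => x ^ (1/p)) A * B *
        cfc (fun x : ℝ => x ^ ((p-1)/p))
          (cfc (fun x : ℝ => x ^ p) (B * cfc (fun x : ℝ => x ^ (1/p)) A * B))).trace).re
      = ((cfc (fun x : ℝ => x ^ p) (B * cfc (fun x : ℝ => x ^ (1/p)) A * B)).trace).re := by
  have hsA : (cfc (fun x : ℝ => x ^ (1/p)) A).PosSemidef :=
    posSemidef_cfc hA _ (fun x hx => Real.rpow_nonneg hx _)
  set M := B * cfc (fun x : ℝ => x ^ (1/p)) A * B with hMdef
  have hM : M.PosSemidef := posSemidef_conj hB hsA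
  have hfin : (spectrum ℝ M).Finite := Matrix.finite_real_spectrum
  have hcomp : cfc (fun x : ℝ => x ^ ((p-1)/p)) (cfc (fun x : ℝ => x ^ p) M)
      = cfc (fun x : ℝ => x ^ (p-1)) M := by
    rw [← cfc_comp (fun x : ℝ => x ^ ((p-1)/p)) (fun x : ℝ => x ^ p) M (isSA hM.1)
      (continuousOn_finite (hfin.image _) _) (continuousOn_finite hfin _)]
    apply cfc_congr
    intro x hx
    exact rpow_comp1 hp (spec_nonneg hM x hx)
  rw [hcomp]
  have h1 : M * cfc (fun x : ℝ => x ^ (p-1)) M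
      = cfc (fun x : ℝ => x) M * (1 : Mat) * cfc (fun x : ℝ => x ^ (p-1)) M * (1 : Mat)ᴴ := by
    rw [cfc_id' ℝ M (isSA hM.1), Matrix.conjTranspose_one, Matrix.mul_one, Matrix.mul_one]
  rw [h1, trace_formula hM.1 hM.1 _ _ 1, Complex.ofReal_re,
    trace_cfc_eq hM.1, Complex.ofReal_re]
  have hG1 : star (hM.1.eigenvectorUnitary : Mat) * (1:Mat) * (hM.1.eigenvectorUnitary : Mat)
      = 1 := by
    rw [Matrix.mul_one]
    exact star_mul_self_eigen hM.1
  rw [hG1]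
  apply Finset.sum_congr rfl
  intro i _
  rw [Finset.sum_eq_single i]
  · rw [Matrix.one_apply_eq]
    simp only [Complex.normSq_one, mul_one]
    exact rpow_mul_rpow_sub hp (hM.eigenvalues_nonneg i)
  · intro j _ hj
    rw [Matrix.one_apply_ne (Ne.symm hj)]
    simp
  · intro h
    exact absurd (Finset.mem_univ i) h

lemma key_concav {n : ℕ} {s t : ℝ} (hs0 : 0 < s) (hs1 : s < 1) (ht₀ : 0 ≤ t) (ht₁ : t ≤ 1)
    (a1 z1 a2 z2 at' zt : Fin n → ℝ) (w1 w2 wt : Fin n → Fin n → ℝ)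
    (ha1 : ∀ i, 0 ≤ a1 i) (hz1 : ∀ j, 0 ≤ z1 j) (ha2 : ∀ i, 0 ≤ a2 i) (hz2 : ∀ j, 0 ≤ z2 j)
    (hat : ∀ i, 0 ≤ at' i) (hzt : ∀ j, 0 ≤ zt j)
    (hcomb : ∀ l : ℝ, 0 < l →
      t * (∑ i, ∑ j, w1 i j * (a1 i * z1 j/(a1 i + l * z1 j)))
        + (1-t) * (∑ i, ∑ j, w2 i j * (a2 i * z2 j/(a2 i + l * z2 j)))
      ≤ ∑ i, ∑ j, wt i j * (at' i * zt j/(at' i + l * zt j))) :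
    t * (∑ i, ∑ j, (a1 i) ^ s * (z1 j) ^ (1-s) * w1 i j)
      + (1-t) * (∑ i, ∑ j, (a2 i) ^ s * (z2 j) ^ (1-s) * w2 i j)
      ≤ ∑ i, ∑ j, (at' i) ^ s * (zt j) ^ (1-s) * wt i j := by
  have hI1 := integrableOn_sum hs0 hs1 a1 z1 w1 ha1 hz1
  have hI2 := integrableOn_sum hs0 hs1 a2 z2 w2 ha2 hz2
  have hIt := integrableOn_sum hs0 hs1 at' zt wt hat hzt
  have hrw : ∀ (l : ℝ) (aa zz : Fin n → ℝ) (ww : Fin n → Fin n → ℝ),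
      ∑ i, ∑ j, ww i j * (l ^ (s-1) * (aa i * zz j/(aa i + l * zz j)))
        = l ^ (s-1) * ∑ i, ∑ j, ww i j * (aa i * zz j/(aa i + l * zz j)) := by
    intro l aa zz ww
    rw [Finset.mul_sum]
    apply Finset.sum_congr rfl
    intro i _
    rw [Finset.mul_sum]
    apply Finset.sum_congr rfl
    intro j _
    ring
  have hptwise : ∀ l ∈ Ioi (0:ℝ),
      t * (∑ i, ∑ j, w1 i j * (l ^ (s-1) * (a1 i * z1 j/(a1 i + l * z1 j))))
        + (1-t) * (∑ i, ∑ j, w2 i j * (l ^ (s-1) * (a2 i * z2 j/(a2 i + l * z2 j))))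
      ≤ ∑ i, ∑ j, wt i j * (l ^ (s-1) * (at' i * zt j/(at' i + l * zt j))) := by
    intro l hl
    have hl0 : (0:ℝ) < l := hl
    rw [hrw l a1 z1 w1, hrw l a2 z2 w2, hrw l at' zt wt]
    have h := hcomb l hl0
    have hrnn : 0 ≤ l ^ (s-1) := Real.rpow_nonneg hl0.le _
    calc t * (l ^ (s-1) * (∑ i, ∑ j, w1 i j * (a1 i * z1 j/(a1 i + l * z1 j))))
          + (1-t) * (l ^ (s-1) * (∑ i, ∑ j, w2 i j * (a2 i * z2 j/(a2 i + l * z2 j))))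
        = l ^ (s-1) * (t * (∑ i, ∑ j, w1 i j * (a1 i * z1 j/(a1 i + l * z1 j)))
            + (1-t) * (∑ i, ∑ j, w2 i j * (a2 i * z2 j/(a2 i + l * z2 j)))) := by ring
      _ ≤ l ^ (s-1) * ∑ i, ∑ j, wt i j * (at' i * zt j/(at' i + l * zt j)) :=
          mul_le_mul_of_nonneg_left h hrnn
  have hImix : IntegrableOn (fun l : ℝ =>
      t * (∑ i, ∑ j, w1 i j * (l ^ (s-1) * (a1 i * z1 j/(a1 i + l * z1 j))))
        + (1-t) * (∑ i, ∑ j, w2 i j * (l ^ (s-1) * (a2 i * z2 j/(a2 i + l * z2 j)))))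
      (Ioi 0) := (hI1.const_mul t).add (hI2.const_mul (1-t))
  have hmono := setIntegral_mono_on hImix hIt measurableSet_Ioi hptwise
  rw [integral_add (hI1.const_mul t) (hI2.const_mul (1-t)), integral_const_mul,
    integral_const_mul, integral_sum hs0 hs1 a1 z1 w1 ha1 hz1,
    integral_sum hs0 hs1 a2 z2 w2 ha2 hz2, integral_sum hs0 hs1 at' zt wt hat hzt] at hmono
  have hCs := Cs_pos hs0 hs1
  rw [show t * (Cs s * ∑ i, ∑ j, (a1 i) ^ s * (z1 j) ^ (1-s) * w1 i j)
      + (1-t) * (Cs s * ∑ i, ∑ j, (a2 i) ^ s * (z2 j) ^ (1-s) * w2 i j)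
      = Cs s * (t * (∑ i, ∑ j, (a1 i) ^ s * (z1 j) ^ (1-s) * w1 i j)
        + (1-t) * (∑ i, ∑ j, (a2 i) ^ s * (z2 j) ^ (1-s) * w2 i j)) from by ring] at hmono
  exact le_of_mul_le_mul_left hmono hCs

lemma concav (hB : B.IsHermitian) {p : ℝ} (hp : 1 < p) {t : ℝ} (ht₀ : 0 ≤ t) (ht₁ : t ≤ 1)
    {A₁ A₂ Z₁ Z₂ : Mat} (hA₁ : A₁.PosSemidef) (hA₂ : A₂.PosSemidef)
    (hZ₁ : Z₁.PosSemidef) (hZ₂ : Z₂.PosSemidef) :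
    t * ((B * cfc (fun x : ℝ => x ^ (1/p)) A₁ * B *
          cfc (fun x : ℝ => x ^ ((p-1)/p)) Z₁).trace).re
      + (1-t) * ((B * cfc (fun x : ℝ => x ^ (1/p)) A₂ * B *
          cfc (fun x : ℝ => x ^ ((p-1)/p)) Z₂).trace).re
      ≤ ((B * cfc (fun x : ℝ => x ^ (1/p)) (t•A₁+(1-t)•A₂) * B *
          cfc (fun x : ℝ => x ^ ((p-1)/p)) (t•Z₁+(1-t)•Z₂)).trace).re := by
  have hAt : (t•A₁+(1-t)•A₂).PosSemidef :=
    posSemidef_add (posSemidef_smul ht₀ hA₁) (posSemidef_smul (by linarith) hA₂)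
  have hZt : (t•Z₁+(1-t)•Z₂).PosSemidef :=
    posSemidef_add (posSemidef_smul ht₀ hZ₁) (posSemidef_smul (by linarith) hZ₂)
  have hs0 : (0:ℝ) < 1/p := by positivity
  have hs1 : 1/p < 1 := by
    rw [div_lt_one (by linarith : (0:ℝ) < p)]
    linarith
  rw [FF_sum hB hp hA₁ hZ₁, FF_sum hB hp hA₂ hZ₂, FF_sum hB hp hAt hZt]
  apply key_concav hs0 hs1 ht₀ ht₁ _ _ _ _ _ _ _ _ _
    hA₁.eigenvalues_nonneg hZ₁.eigenvalues_nonneg hA₂.eigenvalues_nonneg hZ₂.eigenvalues_nonneg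
    hAt.eigenvalues_nonneg hZt.eigenvalues_nonneg
  intro l hl
  obtain ⟨Y₀, hY₀⟩ := LL_attain (B := B) hAt hZt hl
  have h1 := LL_lower (B := B) hA₁ hZ₁ hl Y₀
  have h2 := LL_lower (B := B) hA₂ hZ₂ hl Y₀
  have hlin1 := lin_re (B - Y₀) A₁ A₂ t
  have hlin2 := lin_re_right (Y₀ᴴ * Y₀) Z₁ Z₂ t
  have key : l * (t * (∑ i, ∑ j, Complex.normSq ((star (hA₁.1.eigenvectorUnitary : Mat) * B *
          (hZ₁.1.eigenvectorUnitary : Mat)) i j)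
        * (hA₁.1.eigenvalues i * hZ₁.1.eigenvalues j /
            (hA₁.1.eigenvalues i + l * hZ₁.1.eigenvalues j)))
      + (1-t) * (∑ i, ∑ j, Complex.normSq ((star (hA₂.1.eigenvectorUnitary : Mat) * B *
          (hZ₂.1.eigenvectorUnitary : Mat)) i j)
        * (hA₂.1.eigenvalues i * hZ₂.1.eigenvalues j /
            (hA₂.1.eigenvalues i + l * hZ₂.1.eigenvalues j))))
      ≤ l * (∑ i, ∑ j, Complex.normSq ((star (hAt.1.eigenvectorUnitary : Mat) * B *
          (hZt.1.eigenvectorUnitary : Mat)) i j)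
        * (hAt.1.eigenvalues i * hZt.1.eigenvalues j /
            (hAt.1.eigenvalues i + l * hZt.1.eigenvalues j))) := by
    rw [← hY₀, hlin1, hlin2]
    have e1 := mul_le_mul_of_nonneg_left h1 ht₀
    have e2 := mul_le_mul_of_nonneg_left h2 (by linarith : (0:ℝ) ≤ 1-t)
    linarith
  exact le_of_mul_le_mul_left key hl

end matrices

end EpsteinAux

open Matrix EpsteinAux
open scoped ComplexOrder

/-- Epstein's concavity theorem (special case): for a fixed positive semidefinite
K×K matrix `B` and real `p ≥ 1`, the map `A ↦ Tr (B A^{1/p} B)^p` is concave on the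
cone of positive semidefinite matrices. -/
theorem epstein_concavity (K : ℕ) (B : Matrix (Fin K) (Fin K) ℂ)
    (hB : B.PosSemidef) (p : ℝ) (hp : 1 ≤ p)
    (A₁ A₂ : Matrix (Fin K) (Fin K) ℂ) (hA₁ : A₁.PosSemidef) (hA₂ : A₂.PosSemidef)
    (t : ℝ) (ht₀ : 0 ≤ t) (ht₁ : t ≤ 1) :
    t * ((cfc (fun x : ℝ => x ^ p)
            (B * cfc (fun x : ℝ => x ^ (1 / p)) A₁ * B)).trace).re
      + (1 - t) * ((cfc (fun x : ℝ => x ^ p)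
            (B * cfc (fun x : ℝ => x ^ (1 / p)) A₂ * B)).trace).re
      ≤ ((cfc (fun x : ℝ => x ^ p)
            (B * cfc (fun x : ℝ => x ^ (1 / p)) (t • A₁ + (1 - t) • A₂) * B)).trace).re := by
  rcases eq_or_lt_of_le hp with hp1 | hp1
  · -- p = 1 case
    have hfe : (fun x : ℝ => x ^ (1/p)) = fun x : ℝ => x := by
      funext x
      rw [← hp1]
      norm_num
    have hfe2 : (fun x : ℝ => x ^ p) = fun x : ℝ => x := by
      funext x
      rw [← hp1, Real.rpow_one]
    have hAt : (t•A₁+(1-t)•A₂).PosSemidef :=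
      posSemidef_add (posSemidef_smul ht₀ hA₁) (posSemidef_smul (by linarith) hA₂)
    have hid : ∀ (A : Matrix (Fin K) (Fin K) ℂ), A.PosSemidef →
        cfc (fun x : ℝ => x ^ p) (B * cfc (fun x : ℝ => x ^ (1/p)) A * B)
          = B * A * B := by
      intro A hA
      rw [hfe, hfe2, cfc_id' ℝ A (isSA hA.1), cfc_id' ℝ (B * A * B) (isSA (posSemidef_conj hB.1 hA).1)]
    rw [hid A₁ hA₁, hid A₂ hA₂, hid _ hAt]
    have hlin : B * (t•A₁+(1-t)•A₂) * B = t•(B*A₁*B) + (1-t)•(B*A₂*B) := by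
      rw [Matrix.mul_add, Matrix.add_mul, Matrix.mul_smul, Matrix.smul_mul, Matrix.mul_smul,
        Matrix.smul_mul]
    rw [hlin, Matrix.trace_add, Matrix.trace_smul, Matrix.trace_smul]
    simp [Complex.add_re, Complex.real_smul, Complex.mul_re]
  · -- p > 1 case
    have hsA₁ : (cfc (fun x : ℝ => x ^ (1/p)) A₁).PosSemidef :=
      posSemidef_cfc hA₁ _ (fun x hx => Real.rpow_nonneg hx _)
    have hsA₂ : (cfc (fun x : ℝ => x ^ (1/p)) A₂).PosSemidef :=
      posSemidef_cfc hA₂ _ (fun x hx => Real.rpow_nonneg hx _)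
    have hM₁ : (B * cfc (fun x : ℝ => x ^ (1/p)) A₁ * B).PosSemidef := posSemidef_conj hB.1 hsA₁
    have hM₂ : (B * cfc (fun x : ℝ => x ^ (1/p)) A₂ * B).PosSemidef := posSemidef_conj hB.1 hsA₂
    set Z₁ := cfc (fun x : ℝ => x ^ p) (B * cfc (fun x : ℝ => x ^ (1/p)) A₁ * B) with hZ₁def
    set Z₂ := cfc (fun x : ℝ => x ^ p) (B * cfc (fun x : ℝ => x ^ (1/p)) A₂ * B) with hZ₂def
    have hZ₁ : Z₁.PosSemidef := posSemidef_cfc hM₁ _ (fun x hx => Real.rpow_nonneg hx _)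
    have hZ₂ : Z₂.PosSemidef := posSemidef_cfc hM₂ _ (fun x hx => Real.rpow_nonneg hx _)
    have hAt : (t•A₁+(1-t)•A₂).PosSemidef :=
      posSemidef_add (posSemidef_smul ht₀ hA₁) (posSemidef_smul (by linarith) hA₂)
    have hZt : (t•Z₁+(1-t)•Z₂).PosSemidef :=
      posSemidef_add (posSemidef_smul ht₀ hZ₁) (posSemidef_smul (by linarith) hZ₂)
    have h1 := young_step (B := B) hB.1 hp1 hAt hZt
    have h2 := concav (B := B) hB.1 hp1 ht₀ ht₁ hA₁ hA₂ hZ₁ hZ₂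
    have h3 := attain (B := B) hB.1 hp1 hA₁
    have h4 := attain (B := B) hB.1 hp1 hA₂
    have h5 : ((t•Z₁+(1-t)•Z₂).trace).re = t * (Z₁.trace).re + (1-t) * (Z₂.trace).re := by
      rw [Matrix.trace_add, Matrix.trace_smul, Matrix.trace_smul]
      simp [Complex.add_re, Complex.real_smul, Complex.mul_re]
    rw [← hZ₁def] at h3
    rw [← hZ₂def] at h4
    rw [h3, h4] at h2
    rw [h5] at h1
    have hppos : (0:ℝ) < p := by linarith
    have h8 := mul_le_mul_of_nonneg_left h2 hppos.le
    linarith
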